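/- The labeled graph over alphabet {0,1} given by the graph E_ℤ with vertices v_n (n ∈ ℤ) and edges v_n → v_{n+1}, where the edge v_0 → v_1 is labeled 1 and all other edges are labeled 0, is pseudo-periodic: for every m > 1 and every word a_m⋯a_1 in the language L(E^m), there exist n ≥ 1 and words a_{i+m-1}⋯a_i ∈ L(E^m) for 1 ≤ i ≤ n+1 such that a_{n+m-1}⋯a_{n+1} = a_{m-1}⋯a_1. -/

import Mathlib

/-- The labeling of the graph `E_ℤ` (vertices `v_n`, edges `v_n → v_{n+1}`): the edge
`v_0 → v_1` is labeled `true` (i.e. `1`) and all other edges `false` (i.e. `0`). -/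
def zLab : ℤ → Bool := fun z => decide (z = 0)

/-- The language of the labeled graph `(E_ℤ, L)`: a word lies in the language iff it is
the label of some path, i.e. reads `zLab` along consecutive integers. -/
def zLang : Set (List Bool) :=
  { w | ∃ z : ℤ, w = List.ofFn fun k : Fin w.length => zLab (z + k) }

/-- The word `a_{i+m-1} ⋯ a_i` (read with decreasing indices from left to right). -/
def win (a : ℕ → Bool) (i m : ℕ) : List Bool :=
  List.ofFn fun k : Fin m => a (i + m - 1 - k)

lemma mem_zLang_of_unique (w : List Bool)
    (h : ∀ k1 k2 : Fin w.length, w.get k1 = true → w.get k2 = true → k1 = k2) :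
    w ∈ zLang := by
  by_cases he : ∃ k : Fin w.length, w.get k = true
  · obtain ⟨k0, hk0⟩ := he
    refine ⟨-((k0 : ℕ) : ℤ), ?_⟩
    refine List.ext_get (by simp) ?_
    intro n h1 h2
    rw [List.get_ofFn]
    show w.get ⟨n, h1⟩ = zLab (-((k0 : ℕ) : ℤ) + n)
    by_cases hn : n = (k0 : ℕ)
    · have hfin : (⟨n, h1⟩ : Fin w.length) = k0 := Fin.ext hn
      rw [hfin, hk0, zLab]
      subst hn
      simp
    · have hw : w.get ⟨n, h1⟩ = false := by
        by_contra hc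
        exact hn (congrArg Fin.val (h ⟨n, h1⟩ k0 ((Bool.not_eq_false _).mp hc) hk0))
      rw [hw]
      symm
      rw [zLab, decide_eq_false_iff_not]
      intro hzz
      apply hn
      have : (n : ℤ) = ((k0 : ℕ) : ℤ) := by omega
      exact_mod_cast this
  · push_neg at he
    refine ⟨1, ?_⟩
    refine List.ext_get (by simp) ?_
    intro n h1 h2
    rw [List.get_ofFn]
    show w.get ⟨n, h1⟩ = zLab (1 + n)
    have hw : w.get ⟨n, h1⟩ = false := by
      have := he ⟨n, h1⟩
      simpa using this
    rw [hw]
    symm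
    rw [zLab, decide_eq_false_iff_not]
    omega

/-- the labeled graph `(E_ℤ, L)` is pseudo-periodic: for every `m > 1` and
every word `a_m ⋯ a_1` in the language, there are `n ≥ 1` and letters extending the
sequence such that each block `a_{i+m-1} ⋯ a_i` (for `1 ≤ i ≤ n+1`) is in the language
and `a_{n+m-1} ⋯ a_{n+1} = a_{m-1} ⋯ a_1`. -/
theorem stmt16 :
    ∀ m : ℕ, 1 < m → ∀ a : ℕ → Bool, win a 1 m ∈ zLang →
      ∃ n : ℕ, 1 ≤ n ∧ ∃ a' : ℕ → Bool,
        (∀ i, 1 ≤ i → i ≤ m → a' i = a i) ∧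
        (∀ i, 1 ≤ i → i ≤ n + 1 → win a' i m ∈ zLang) ∧
        win a' (n + 1) (m - 1) = win a' 1 (m - 1) := by
  intro m hm a ha
  obtain ⟨z, hz⟩ := ha
  have hlen : (win a 1 m).length = m := by simp [win]
  have hpt : ∀ k : ℕ, k < m → a (m - k) = zLab (z + (k : ℤ)) := by
    intro k hk
    have h1 : k < (win a 1 m).length := by rw [hlen]; exact hk
    have h2 := List.get_of_eq hz ⟨k, h1⟩
    simp only [win, List.get_ofFn, Fin.coe_cast] at h2
    rw [show 1 + m - 1 - k = m - k from by omega] at h2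
    exact h2
  have huniq : ∀ j1 j2, 1 ≤ j1 → j1 ≤ m → 1 ≤ j2 → j2 ≤ m →
      a j1 = true → a j2 = true → j1 = j2 := by
    intro j1 j2 h11 h12 h21 h22 ht1 ht2
    have e1 := hpt (m - j1) (by omega)
    have e2 := hpt (m - j2) (by omega)
    rw [show m - (m - j1) = j1 from by omega, ht1, zLab] at e1
    rw [show m - (m - j2) = j2 from by omega, ht2, zLab] at e2
    have e1' : z + ((m - j1 : ℕ) : ℤ) = 0 := by
      have := e1.symm; simpa using this
    have e2' : z + ((m - j2 : ℕ) : ℤ) = 0 := by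
      have := e2.symm; simpa using this
    have : ((m - j1 : ℕ) : ℤ) = ((m - j2 : ℕ) : ℤ) := by omega
    have : (m - j1 : ℕ) = (m - j2 : ℕ) := by exact_mod_cast this
    omega
  refine ⟨m, by omega, fun i => a ((i - 1) % m + 1), ?_, ?_, ?_⟩
  · intro i h1 h2
    simp only
    rw [Nat.mod_eq_of_lt (by omega)]
    congr 1
    omega
  · intro i hi _
    apply mem_zLang_of_unique
    intro k1 k2 ht1 ht2
    rw [List.get_eq_getElem] at ht1 ht2
    simp only [win, List.getElem_ofFn, Fin.coe_cast] at ht1 ht2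
    have hk1 : (k1 : ℕ) < m := by have := k1.2; simpa [win] using this
    have hk2 : (k2 : ℕ) < m := by have := k2.2; simpa [win] using this
    set f : ℕ → ℕ := fun k => ((i - 1) + (m - 1 - k)) % m + 1 with hf
    rw [show i + m - 1 - (k1 : ℕ) - 1 = (i - 1) + (m - 1 - (k1 : ℕ)) from by omega] at ht1
    rw [show i + m - 1 - (k2 : ℕ) - 1 = (i - 1) + (m - 1 - (k2 : ℕ)) from by omega] at ht2
    have ht1' : a (f k1) = true := ht1
    have ht2' : a (f k2) = true := ht2
    have hmlt : 0 < m := by omega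
    have hb1 : 1 ≤ f k1 ∧ f k1 ≤ m := by
      have := Nat.mod_lt ((i - 1) + (m - 1 - (k1 : ℕ))) hmlt
      constructor <;> simp only [hf] <;> omega
    have hb2 : 1 ≤ f k2 ∧ f k2 ≤ m := by
      have := Nat.mod_lt ((i - 1) + (m - 1 - (k2 : ℕ))) hmlt
      constructor <;> simp only [hf] <;> omega
    have heq := huniq _ _ hb1.1 hb1.2 hb2.1 hb2.2 ht1' ht2'
    simp only [hf] at heq
    have hmod : ((i - 1) + (m - 1 - (k1 : ℕ))) % m = ((i - 1) + (m - 1 - (k2 : ℕ))) % m := by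
      omega
    have hcan : (m - 1 - (k1 : ℕ)) % m = (m - 1 - (k2 : ℕ)) % m :=
      Nat.ModEq.add_left_cancel' (i - 1) hmod
    rw [Nat.mod_eq_of_lt (by omega), Nat.mod_eq_of_lt (by omega)] at hcan
    exact Fin.ext (by omega)
  · simp only [win]
    congr 1
    funext k
    have hk : (k : ℕ) < m - 1 := k.2
    congr 1
    rw [show m + 1 + (m - 1) - 1 - k - 1 = m + (m - 2 - k) from by omega,
        show 1 + (m - 1) - 1 - k - 1 = m - 2 - k from by omega,
        Nat.add_mod_left, Nat.mod_eq_of_lt (by omega)]
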